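/- Let λ, c, L > 0 and set s(α) = √(λ² + α²c²), θ(α) = |α|λ/s(α) for α ∈ ℝ. For fixed y ∈ (0,L), the function f₃(α, y) = ((s+|α|c)²·e^{θ(L−y)} − (s−|α|c)²·e^{−θ(L−y)}) / ((s+|α|c)²·e^{θL} − (s−|α|c)²·e^{−θL}) tends to e^{−λy/c} as |α| → +∞. -/

import Mathlib

open Filter

set_option maxHeartbeats 2000000 in
theorem stmt_19 (lam c L y : ℝ) (hlam : 0 < lam) (hc : 0 < c) (hL : 0 < L)
    (hy : y ∈ Set.Ioo 0 L)
    (s θ : ℝ → ℝ)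
    (hs : s = fun α => Real.sqrt (lam ^ 2 + α ^ 2 * c ^ 2))
    (hθ : θ = fun α => |α| * lam / s α)
    (f3 : ℝ → ℝ)
    (hf3 : f3 = fun α =>
      ((s α + |α| * c) ^ 2 * Real.exp (θ α * (L - y))
        - (s α - |α| * c) ^ 2 * Real.exp (-(θ α * (L - y)))) /
      ((s α + |α| * c) ^ 2 * Real.exp (θ α * L)
        - (s α - |α| * c) ^ 2 * Real.exp (-(θ α * L)))) :
    Tendsto f3 (comap (fun α : ℝ => |α|) atTop) (nhds (Real.exp (-(lam * y / c)))) := by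
  obtain ⟨hy0, hyL⟩ := hy
  have hc' : c ≠ 0 := ne_of_gt hc
  suffices h : Tendsto (fun x : ℝ =>
      ((Real.sqrt (lam ^ 2 + x ^ 2 * c ^ 2) + x * c) ^ 2 *
          Real.exp (x * lam / Real.sqrt (lam ^ 2 + x ^ 2 * c ^ 2) * (L - y))
        - (Real.sqrt (lam ^ 2 + x ^ 2 * c ^ 2) - x * c) ^ 2 *
          Real.exp (-(x * lam / Real.sqrt (lam ^ 2 + x ^ 2 * c ^ 2) * (L - y)))) /
      ((Real.sqrt (lam ^ 2 + x ^ 2 * c ^ 2) + x * c) ^ 2 *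
          Real.exp (x * lam / Real.sqrt (lam ^ 2 + x ^ 2 * c ^ 2) * L)
        - (Real.sqrt (lam ^ 2 + x ^ 2 * c ^ 2) - x * c) ^ 2 *
          Real.exp (-(x * lam / Real.sqrt (lam ^ 2 + x ^ 2 * c ^ 2) * L))))
      atTop (nhds (Real.exp (-(lam * y / c)))) by
    have heq : f3 = (fun x : ℝ =>
      ((Real.sqrt (lam ^ 2 + x ^ 2 * c ^ 2) + x * c) ^ 2 *
          Real.exp (x * lam / Real.sqrt (lam ^ 2 + x ^ 2 * c ^ 2) * (L - y))
        - (Real.sqrt (lam ^ 2 + x ^ 2 * c ^ 2) - x * c) ^ 2 *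
          Real.exp (-(x * lam / Real.sqrt (lam ^ 2 + x ^ 2 * c ^ 2) * (L - y)))) /
      ((Real.sqrt (lam ^ 2 + x ^ 2 * c ^ 2) + x * c) ^ 2 *
          Real.exp (x * lam / Real.sqrt (lam ^ 2 + x ^ 2 * c ^ 2) * L)
        - (Real.sqrt (lam ^ 2 + x ^ 2 * c ^ 2) - x * c) ^ 2 *
          Real.exp (-(x * lam / Real.sqrt (lam ^ 2 + x ^ 2 * c ^ 2) * L)))) ∘
        (fun α : ℝ => |α|) := by
      funext α
      simp only [hf3, hθ, hs, Function.comp_apply, sq_abs]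
    rw [heq]
    exact h.comp tendsto_comap
  -- basic facts
  have hsqpos : ∀ x : ℝ, 0 < Real.sqrt (lam ^ 2 + x ^ 2 * c ^ 2) := by
    intro x; apply Real.sqrt_pos.2; positivity
  have hsqsq : ∀ x : ℝ, Real.sqrt (lam ^ 2 + x ^ 2 * c ^ 2) ^ 2 = lam ^ 2 + x ^ 2 * c ^ 2 := by
    intro x; apply Real.sq_sqrt; positivity
  have hA : Tendsto (fun x : ℝ => Real.sqrt (lam ^ 2 + x ^ 2 * c ^ 2) + x * c) atTop atTop := by
    apply tendsto_atTop_mono _ (Tendsto.atTop_mul_const hc tendsto_id)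
    intro x
    have h1 : (0:ℝ) ≤ Real.sqrt (lam ^ 2 + x ^ 2 * c ^ 2) := Real.sqrt_nonneg _
    simp only [id]
    linarith
  have hA4 : Tendsto (fun x : ℝ => (Real.sqrt (lam ^ 2 + x ^ 2 * c ^ 2) + x * c) ^ 4) atTop atTop :=
    (tendsto_pow_atTop (by norm_num)).comp hA
  have hR : Tendsto (fun x : ℝ => lam ^ 4 / (Real.sqrt (lam ^ 2 + x ^ 2 * c ^ 2) + x * c) ^ 4)
      atTop (nhds 0) := tendsto_const_nhds.div_atTop hA4
  have hTlim : Tendsto (fun x : ℝ => x * lam / Real.sqrt (lam ^ 2 + x ^ 2 * c ^ 2))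
      atTop (nhds (lam / c)) := by
    have h1 : Tendsto (fun x : ℝ => lam ^ 2 / x ^ 2 + c ^ 2) atTop (nhds (0 + c ^ 2)) :=
      (tendsto_const_nhds.div_atTop (tendsto_pow_atTop two_ne_zero)).add tendsto_const_nhds
    have h2 : Tendsto (fun x : ℝ => Real.sqrt (lam ^ 2 / x ^ 2 + c ^ 2)) atTop (nhds c) := by
      have h3 := (Real.continuous_sqrt.tendsto (0 + c ^ 2)).comp h1
      simpa [Real.sqrt_sq hc.le, Function.comp_def] using h3
    have h4 : Tendsto (fun x : ℝ => lam / Real.sqrt (lam ^ 2 / x ^ 2 + c ^ 2)) atTop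
        (nhds (lam / c)) := tendsto_const_nhds.div h2 hc'
    apply Tendsto.congr' _ h4
    filter_upwards [eventually_gt_atTop 0] with x hx
    have hx2 : (0:ℝ) < x ^ 2 := by positivity
    have hdiv : lam ^ 2 / x ^ 2 + c ^ 2 = (lam ^ 2 + x ^ 2 * c ^ 2) / x ^ 2 := by
      field_simp
    rw [hdiv, Real.sqrt_div (by positivity), Real.sqrt_sq hx.le]
    have hS := hsqpos x
    field_simp
  -- limit of the simplified function G
  have hG : Tendsto (fun x : ℝ =>
      (Real.exp (-(x * lam / Real.sqrt (lam ^ 2 + x ^ 2 * c ^ 2) * y))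
        - lam ^ 4 / (Real.sqrt (lam ^ 2 + x ^ 2 * c ^ 2) + x * c) ^ 4 *
          Real.exp (-(x * lam / Real.sqrt (lam ^ 2 + x ^ 2 * c ^ 2) * (2 * L - y)))) /
      (1 - lam ^ 4 / (Real.sqrt (lam ^ 2 + x ^ 2 * c ^ 2) + x * c) ^ 4 *
          Real.exp (-(2 * (x * lam / Real.sqrt (lam ^ 2 + x ^ 2 * c ^ 2) * L)))))
      atTop (nhds (Real.exp (-(lam * y / c)))) := by
    have hnum : Tendsto (fun x : ℝ =>
        Real.exp (-(x * lam / Real.sqrt (lam ^ 2 + x ^ 2 * c ^ 2) * y))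
          - lam ^ 4 / (Real.sqrt (lam ^ 2 + x ^ 2 * c ^ 2) + x * c) ^ 4 *
            Real.exp (-(x * lam / Real.sqrt (lam ^ 2 + x ^ 2 * c ^ 2) * (2 * L - y))))
        atTop (nhds (Real.exp (-(lam / c * y))
          - 0 * Real.exp (-(lam / c * (2 * L - y))))) := by
      apply Tendsto.sub
      · exact (Real.continuous_exp.tendsto _).comp ((hTlim.mul_const y).neg)
      · exact hR.mul ((Real.continuous_exp.tendsto _).comp ((hTlim.mul_const (2 * L - y)).neg))
    have hden : Tendsto (fun x : ℝ =>
        1 - lam ^ 4 / (Real.sqrt (lam ^ 2 + x ^ 2 * c ^ 2) + x * c) ^ 4 *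
          Real.exp (-(2 * (x * lam / Real.sqrt (lam ^ 2 + x ^ 2 * c ^ 2) * L))))
        atTop (nhds (1 - 0 * Real.exp (-(2 * (lam / c * L))))) := by
      apply Tendsto.sub tendsto_const_nhds
      exact hR.mul ((Real.continuous_exp.tendsto _).comp (((hTlim.mul_const L).const_mul 2).neg))
    have hd0 : (1 : ℝ) - 0 * Real.exp (-(2 * (lam / c * L))) ≠ 0 := by norm_num
    have := hnum.div hden hd0
    simp only [zero_mul, sub_zero, div_one] at this
    have harg : -(lam / c * y) = -(lam * y / c) := by ring
    rw [harg] at this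
    exact this
  -- eventual equality
  apply Tendsto.congr' _ hG
  filter_upwards [eventually_gt_atTop 0] with x hx
  have hS : 0 < Real.sqrt (lam ^ 2 + x ^ 2 * c ^ 2) := hsqpos x
  have hS2 := hsqsq x
  set S := Real.sqrt (lam ^ 2 + x ^ 2 * c ^ 2) with hSdef
  set T := x * lam / S with hTdef
  have hV : 0 < S + x * c := by
    have : 0 < x * c := mul_pos hx hc
    linarith
  have hkey : S - x * c = lam ^ 2 / (S + x * c) := by
    rw [eq_div_iff (ne_of_gt hV)]
    nlinarith [hS2]
  have hSlam : lam ≤ S := by nlinarith [hS2, hS]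
  have hVlam : lam < S + x * c := by
    have : 0 < x * c := mul_pos hx hc
    linarith
  set V := S + x * c with hVdef
  have hV4 : lam ^ 4 < V ^ 4 := pow_lt_pow_left₀ hVlam hlam.le (by norm_num)
  have hT0 : 0 ≤ T := by
    rw [hTdef]
    exact div_nonneg (mul_nonneg hx.le hlam.le) hS.le
  set E1 := Real.exp (T * L) with hE1def
  set E2 := Real.exp (T * y) with hE2def
  have hE1p : 0 < E1 := Real.exp_pos _
  have hE2p : 0 < E2 := Real.exp_pos _
  have hE1ge : 1 ≤ E1 := Real.one_le_exp (mul_nonneg hT0 hL.le)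
  have e1 : Real.exp (T * (L - y)) = E1 / E2 := by
    rw [hE1def, hE2def, ← Real.exp_sub]; congr 1; ring
  have e2 : Real.exp (-(T * (L - y))) = E2 / E1 := by
    rw [hE1def, hE2def, ← Real.exp_sub]; congr 1; ring
  have e3 : Real.exp (-(T * L)) = 1 / E1 := by
    rw [hE1def, Real.exp_neg, one_div]
  have e4 : Real.exp (-(T * y)) = 1 / E2 := by
    rw [hE2def, Real.exp_neg, one_div]
  have e5 : Real.exp (-(T * (2 * L - y))) = E2 / (E1 * E1) := by
    rw [hE1def, hE2def, ← Real.exp_add, ← Real.exp_sub]; congr 1; ring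
  have e6 : Real.exp (-(2 * (T * L))) = 1 / (E1 * E1) := by
    rw [hE1def, ← Real.exp_add, one_div, ← Real.exp_neg]; congr 1; ring
  clear_value S T V E1 E2
  rw [e1, e2, e3, e4, e5, e6, hkey]
  have hden1 : 0 < 1 - lam ^ 4 / V ^ 4 * (1 / (E1 * E1)) := by
    have hq1 : lam ^ 4 / V ^ 4 < 1 := by
      rw [div_lt_one (by positivity)]; exact hV4
    have hq0 : 0 < lam ^ 4 / V ^ 4 := by positivity
    have h1e : 1 / (E1 * E1) ≤ 1 := by
      rw [div_le_one (by positivity)]; nlinarith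
    have h0e : 0 < 1 / (E1 * E1) := by positivity
    nlinarith
  have hden2 : 0 < V ^ 2 * E1 - (lam ^ 2 / V) ^ 2 * (1 / E1) := by
    have hw2 : (lam ^ 2 / V) ^ 2 < V ^ 2 := by
      rw [div_pow, div_lt_iff₀ (by positivity)]
      nlinarith
    have h1e : 1 / E1 ≤ 1 := by rw [div_le_one hE1p]; exact hE1ge
    have h0e : 0 < 1 / E1 := by positivity
    have h3 : V ^ 2 ≤ V ^ 2 * E1 := le_mul_of_one_le_right (by positivity) hE1ge
    nlinarith [sq_nonneg (lam ^ 2 / V)]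
  rw [div_eq_div_iff (ne_of_gt hden1) (ne_of_gt hden2)]
  field_simp
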